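/- arXiv:1411.0793 — 2 statements merged into one kernel-verified Lean document; each statement's English description precedes it below -/
import Mathlib

section
/- Let Θ ⊆ ℝ^p, let w : [0,1] → [0,∞) be continuous, and let F : [0,1] × ℝ^d × Θ → ℝ^d be continuous and satisfy the uniform Lipschitz condition ‖F(t, y, η) − F(t, y', η)‖ ≤ L‖y − y'‖ for all t ∈ [0,1], y, y' ∈ ℝ^d, η ∈ Θ. Then for any two continuously differentiable functions f, f0 : [0,1] → ℝ^d and every η ∈ Θ, |R_f(η) − R_{f0}(η)| ≤ (∫₀¹ ‖f'(t) − f0'(t)‖² w(t) dt)^{1/2} + L (∫₀¹ w(t) dt)^{1/2} · sup_{t∈[0,1]} ‖f(t) − f0(t)‖, where R_g(η) = (∫₀¹ ‖g'(t) − F(t, g(t), η)‖² w(t) dt)^{1/2}. -/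
open MeasureTheory Set ENNReal

section Aux

variable {α : Type*} [MeasurableSpace α] {μ : Measure α}
  {E : Type*} [NormedAddCommGroup E]

lemma sqrt_integral_eq_norm_toLp {A : α → E} (hA : MemLp A 2 μ) :
    Real.sqrt (∫ a, ‖A a‖ ^ 2 ∂μ) = ‖hA.toLp A‖ := by
  rw [Lp.norm_toLp, hA.eLpNorm_eq_integral_rpow_norm two_ne_zero ENNReal.ofNat_ne_top,
    ENNReal.toReal_ofReal (by positivity)]
  have h2 : ((2 : ℝ≥0∞)).toReal = (2 : ℝ) := by simp
  rw [h2, Real.sqrt_eq_rpow]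
  norm_num

lemma sqrt_integral_sq_diff_le {A B : α → E} (hA : MemLp A 2 μ) (hB : MemLp B 2 μ) :
    |Real.sqrt (∫ a, ‖A a‖ ^ 2 ∂μ) - Real.sqrt (∫ a, ‖B a‖ ^ 2 ∂μ)|
      ≤ Real.sqrt (∫ a, ‖A a - B a‖ ^ 2 ∂μ) := by
  calc |Real.sqrt (∫ a, ‖A a‖ ^ 2 ∂μ) - Real.sqrt (∫ a, ‖B a‖ ^ 2 ∂μ)|
      = |‖hA.toLp A‖ - ‖hB.toLp B‖| := by
        rw [sqrt_integral_eq_norm_toLp hA, sqrt_integral_eq_norm_toLp hB]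
    _ ≤ ‖hA.toLp A - hB.toLp B‖ := abs_norm_sub_norm_le _ _
    _ = Real.sqrt (∫ a, ‖A a - B a‖ ^ 2 ∂μ) := by
        rw [← MemLp.toLp_sub]
        exact (sqrt_integral_eq_norm_toLp (hA.sub hB)).symm

lemma sqrt_integral_sq_add_le {A B : α → E} (hA : MemLp A 2 μ) (hB : MemLp B 2 μ) :
    Real.sqrt (∫ a, ‖A a + B a‖ ^ 2 ∂μ)
      ≤ Real.sqrt (∫ a, ‖A a‖ ^ 2 ∂μ) + Real.sqrt (∫ a, ‖B a‖ ^ 2 ∂μ) := by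
  calc Real.sqrt (∫ a, ‖A a + B a‖ ^ 2 ∂μ)
      = ‖hA.toLp A + hB.toLp B‖ := by
        rw [← MemLp.toLp_add]
        exact sqrt_integral_eq_norm_toLp (hA.add hB)
    _ ≤ ‖hA.toLp A‖ + ‖hB.toLp B‖ := norm_add_le _ _
    _ = _ := by rw [sqrt_integral_eq_norm_toLp hA, sqrt_integral_eq_norm_toLp hB]

end Aux

/-- **Stability of the two-step criterion under perturbation of the curve.**
`|R_f(η) − R_{f0}(η)| ≤ (∫₀¹‖f'−f0'‖²w)^{1/2} + L (∫₀¹ w)^{1/2} sup_{[0,1]}‖f − f0‖`. -/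
theorem criterion_stability
    {p d : ℕ} (Θ : Set (EuclideanSpace ℝ (Fin p)))
    (w : ℝ → ℝ) (hw : ContinuousOn w (Icc (0:ℝ) 1)) (hw0 : ∀ t ∈ Icc (0:ℝ) 1, 0 ≤ w t)
    (F : ℝ → EuclideanSpace ℝ (Fin d) → EuclideanSpace ℝ (Fin p) → EuclideanSpace ℝ (Fin d))
    (hFcont : Continuous fun q : ℝ × EuclideanSpace ℝ (Fin d) × EuclideanSpace ℝ (Fin p) =>
      F q.1 q.2.1 q.2.2)
    (L : ℝ)
    (hFLip : ∀ t ∈ Icc (0:ℝ) 1, ∀ (y y' : EuclideanSpace ℝ (Fin d)), ∀ η ∈ Θ,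
      ‖F t y η - F t y' η‖ ≤ L * ‖y - y'‖)
    (R : (ℝ → EuclideanSpace ℝ (Fin d)) → EuclideanSpace ℝ (Fin p) → ℝ)
    (hR : ∀ (g : ℝ → EuclideanSpace ℝ (Fin d)) (η : EuclideanSpace ℝ (Fin p)),
      R g η = Real.sqrt (∫ t in Icc (0:ℝ) 1, ‖deriv g t - F t (g t) η‖ ^ 2 * w t))
    (f f0 : ℝ → EuclideanSpace ℝ (Fin d))
    (hf : ContDiff ℝ 1 f) (hf0 : ContDiff ℝ 1 f0)
    (η : EuclideanSpace ℝ (Fin p)) (hη : η ∈ Θ) :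
    |R f η - R f0 η| ≤
      Real.sqrt (∫ t in Icc (0:ℝ) 1, ‖deriv f t - deriv f0 t‖ ^ 2 * w t)
        + L * Real.sqrt (∫ t in Icc (0:ℝ) 1, w t)
            * (⨆ t : Icc (0:ℝ) 1, ‖f t - f0 t‖) := by
  classical
  set μ := (volume : Measure ℝ).restrict (Icc (0:ℝ) 1) with hμ
  haveI : IsFiniteMeasure μ := by
    constructor
    rw [hμ, Measure.restrict_apply_univ, Real.volume_Icc]
    exact ENNReal.ofReal_lt_top
  have hfc : Continuous f := hf.continuous
  have hf0c : Continuous f0 := hf0.continuous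
  have hf'c : Continuous (deriv f) := hf.continuous_deriv le_rfl
  have hf0'c : Continuous (deriv f0) := hf0.continuous_deriv le_rfl
  have hFf : Continuous fun t => F t (f t) η :=
    hFcont.comp (continuous_id.prodMk (hfc.prodMk continuous_const))
  have hFf0 : Continuous fun t => F t (f0 t) η :=
    hFcont.comp (continuous_id.prodMk (hf0c.prodMk continuous_const))
  have hs : ContinuousOn (fun t => Real.sqrt (w t)) (Icc (0:ℝ) 1) :=
    Real.continuous_sqrt.comp_continuousOn hw
  -- membership in L²
  have mem : ∀ v : ℝ → EuclideanSpace ℝ (Fin d), Continuous v →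
      MemLp (fun t => Real.sqrt (w t) • v t) 2 μ := by
    intro v hv
    have hcont : ContinuousOn (fun t => Real.sqrt (w t) • v t) (Icc (0:ℝ) 1) :=
      hs.smul hv.continuousOn
    obtain ⟨C, hC⟩ := isCompact_Icc.exists_bound_of_continuousOn hcont
    exact MemLp.of_bound (hcont.aestronglyMeasurable measurableSet_Icc) C
      (((ae_restrict_mem measurableSet_Icc).mono fun t ht => hC t ht))
  -- rewriting the weighted integrals
  have inteq : ∀ v : ℝ → EuclideanSpace ℝ (Fin d),
      ∫ t, ‖Real.sqrt (w t) • v t‖ ^ 2 ∂μ = ∫ t in Icc (0:ℝ) 1, ‖v t‖ ^ 2 * w t := by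
    intro v
    refine setIntegral_congr_fun measurableSet_Icc fun t ht => ?_
    rw [norm_smul, Real.norm_eq_abs, abs_of_nonneg (Real.sqrt_nonneg _), mul_pow,
      Real.sq_sqrt (hw0 t ht), mul_comm]
  by_cases hd : Nontrivial (EuclideanSpace ℝ (Fin d))
  · -- nontrivial case: L ≥ 0
    obtain ⟨y, y', hyy⟩ := hd.exists_pair_ne
    have h0 : (0:ℝ) ∈ Icc (0:ℝ) 1 := by norm_num
    have hL : 0 ≤ L := by
      have h2 : 0 < ‖y - y'‖ := by
        rw [norm_pos_iff, sub_ne_zero]; exact hyy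
      by_contra hneg
      push_neg at hneg
      have h3 : L * ‖y - y'‖ < 0 := mul_neg_of_neg_of_pos hneg h2
      linarith [norm_nonneg (F 0 y η - F 0 y' η), hFLip 0 h0 y y' η hη]
    set M : ℝ := ⨆ t : Icc (0:ℝ) 1, ‖f t - f0 t‖ with hM
    have hgc : Continuous fun t : Icc (0:ℝ) 1 => ‖f t - f0 t‖ :=
      ((hfc.comp continuous_subtype_val).sub (hf0c.comp continuous_subtype_val)).norm
    have hbdd : BddAbove (range fun t : Icc (0:ℝ) 1 => ‖f t - f0 t‖) :=
      (isCompact_range hgc).bddAbove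
    have hfM : ∀ t ∈ Icc (0:ℝ) 1, ‖f t - f0 t‖ ≤ M := fun t ht =>
      le_ciSup hbdd (⟨t, ht⟩ : Icc (0:ℝ) 1)
    have hM0 : 0 ≤ M :=
      le_trans (norm_nonneg _) (hfM 0 h0)
    have memA := mem (fun t => deriv f t - F t (f t) η) (hf'c.sub hFf)
    have memB := mem (fun t => deriv f0 t - F t (f0 t) η) (hf0'c.sub hFf0)
    have memC := mem (fun t => deriv f t - deriv f0 t) (hf'c.sub hf0'c)
    have memD := mem (fun t => F t (f0 t) η - F t (f t) η) (hFf0.sub hFf)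
    have hRf : R f η =
        Real.sqrt (∫ t, ‖Real.sqrt (w t) • (deriv f t - F t (f t) η)‖ ^ 2 ∂μ) := by
      rw [hR]; congr 1; exact (inteq _).symm
    have hRf0 : R f0 η =
        Real.sqrt (∫ t, ‖Real.sqrt (w t) • (deriv f0 t - F t (f0 t) η)‖ ^ 2 ∂μ) := by
      rw [hR]; congr 1; exact (inteq _).symm
    -- bound for the Lipschitz term
    have hDbound : Real.sqrt (∫ t in Icc (0:ℝ) 1, ‖F t (f0 t) η - F t (f t) η‖ ^ 2 * w t)
        ≤ L * Real.sqrt (∫ t in Icc (0:ℝ) 1, w t) * M := by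
      have hint1 : IntegrableOn (fun t => ‖F t (f0 t) η - F t (f t) η‖ ^ 2 * w t)
          (Icc (0:ℝ) 1) volume :=
        (((hFf0.sub hFf).norm.pow 2).continuousOn.mul hw).integrableOn_compact isCompact_Icc
      have hint2 : IntegrableOn (fun t => (L * M) ^ 2 * w t) (Icc (0:ℝ) 1) volume :=
        (continuousOn_const.mul hw).integrableOn_compact isCompact_Icc
      have hmono : ∫ t in Icc (0:ℝ) 1, ‖F t (f0 t) η - F t (f t) η‖ ^ 2 * w t
          ≤ ∫ t in Icc (0:ℝ) 1, (L * M) ^ 2 * w t := by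
        refine setIntegral_mono_on hint1 hint2 measurableSet_Icc fun t ht => ?_
        refine mul_le_mul_of_nonneg_right ?_ (hw0 t ht)
        have h1 : ‖F t (f0 t) η - F t (f t) η‖ ≤ L * M := by
          calc ‖F t (f0 t) η - F t (f t) η‖ ≤ L * ‖f0 t - f t‖ :=
                hFLip t ht (f0 t) (f t) η hη
            _ = L * ‖f t - f0 t‖ := by rw [norm_sub_rev]
            _ ≤ L * M := mul_le_mul_of_nonneg_left (hfM t ht) hL
        exact pow_le_pow_left₀ (norm_nonneg _) h1 2
      calc Real.sqrt (∫ t in Icc (0:ℝ) 1, ‖F t (f0 t) η - F t (f t) η‖ ^ 2 * w t)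
          ≤ Real.sqrt (∫ t in Icc (0:ℝ) 1, (L * M) ^ 2 * w t) := Real.sqrt_le_sqrt hmono
        _ = Real.sqrt ((L * M) ^ 2 * ∫ t in Icc (0:ℝ) 1, w t) := by
            rw [integral_const_mul]
        _ = L * M * Real.sqrt (∫ t in Icc (0:ℝ) 1, w t) := by
            rw [Real.sqrt_mul (sq_nonneg _), Real.sqrt_sq (mul_nonneg hL hM0)]
        _ = L * Real.sqrt (∫ t in Icc (0:ℝ) 1, w t) * M := by ring
    calc |R f η - R f0 η|
        ≤ Real.sqrt (∫ t, ‖Real.sqrt (w t) • (deriv f t - F t (f t) η)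
            - Real.sqrt (w t) • (deriv f0 t - F t (f0 t) η)‖ ^ 2 ∂μ) := by
          rw [hRf, hRf0]; exact sqrt_integral_sq_diff_le memA memB
      _ = Real.sqrt (∫ t, ‖Real.sqrt (w t) • (deriv f t - deriv f0 t)
            + Real.sqrt (w t) • (F t (f0 t) η - F t (f t) η)‖ ^ 2 ∂μ) := by
          congr 1
          refine integral_congr_ae (Filter.Eventually.of_forall fun t => ?_)
          beta_reduce
          rw [← smul_sub, ← smul_add]
          have : (deriv f t - F t (f t) η) - (deriv f0 t - F t (f0 t) η)
              = (deriv f t - deriv f0 t) + (F t (f0 t) η - F t (f t) η) := by abel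
          rw [this]
      _ ≤ Real.sqrt (∫ t, ‖Real.sqrt (w t) • (deriv f t - deriv f0 t)‖ ^ 2 ∂μ)
            + Real.sqrt (∫ t, ‖Real.sqrt (w t) • (F t (f0 t) η - F t (f t) η)‖ ^ 2 ∂μ) :=
          sqrt_integral_sq_add_le memC memD
      _ = Real.sqrt (∫ t in Icc (0:ℝ) 1, ‖deriv f t - deriv f0 t‖ ^ 2 * w t)
            + Real.sqrt (∫ t in Icc (0:ℝ) 1, ‖F t (f0 t) η - F t (f t) η‖ ^ 2 * w t) := by
          rw [inteq, inteq]
      _ ≤ _ := add_le_add_right hDbound _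
  · -- degenerate case: the state space is a subsingleton
    have hsub : Subsingleton (EuclideanSpace ℝ (Fin d)) := not_nontrivial_iff_subsingleton.mp hd
    have hRR : R f η = R f0 η := by
      rw [hR, hR]
      congr 1
      refine setIntegral_congr_fun measurableSet_Icc fun t _ => ?_
      rw [Subsingleton.elim (deriv f t - F t (f t) η) (deriv f0 t - F t (f0 t) η)]
    have hsup : (⨆ t : Icc (0:ℝ) 1, ‖f t - f0 t‖) = 0 := by
      have : ∀ t : Icc (0:ℝ) 1, ‖f t - f0 t‖ = 0 := fun t => by
        rw [Subsingleton.elim (f t - f0 t) 0, norm_zero]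
      simp [this]
    rw [hRR, sub_self, abs_zero, hsup, mul_zero, add_zero]
    exact Real.sqrt_nonneg _
end

section
/- Let Σ be a k×k symmetric positive definite real matrix, let σ0 > 0, and let 0 < a < σ0 < b. Then there exists a constant C > 0 such that for every σ ∈ [a, b] and every μ ∈ ℝ^k, the total variation distance between the multivariate Gaussian distributions N(μ, σ²Σ) and N(μ, σ0²Σ) satisfies sup_{B Borel} |N(μ, σ²Σ)(B) − N(μ, σ0²Σ)(B)| ≤ C |σ − σ0|. -/
open MeasureTheory Matrix

/-- The multivariate Gaussian measure `N(μ, Σ)` on `ℝ^k`, defined through its Lebesgue density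
`x ↦ exp(−(x−μ)ᵀΣ⁻¹(x−μ)/2) / ((2π)^k det Σ)^{1/2}`. -/
noncomputable def gaussianMeasure {k : ℕ} (μ : Fin k → ℝ)
    (S : Matrix (Fin k) (Fin k) ℝ) : Measure (Fin k → ℝ) :=
  volume.withDensity fun x =>
    ENNReal.ofReal
      (Real.exp (-(1 / 2) * ((x - μ) ⬝ᵥ (S⁻¹ *ᵥ (x - μ)))) /
        Real.sqrt ((2 * Real.pi) ^ k * S.det))


lemma aux_cont {k : ℕ} (M : Matrix (Fin k) (Fin k) ℝ) :
    Continuous (fun y : Fin k → ℝ => y ⬝ᵥ M *ᵥ y) := by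
  have : (fun y : Fin k → ℝ => y ⬝ᵥ M *ᵥ y)
      = fun y => ∑ i, y i * ∑ j, M i j * y j := by
    funext y; simp [dotProduct, Matrix.mulVec]
  rw [this]
  exact continuous_finset_sum _ fun i _ =>
    (continuous_apply i).mul (continuous_finset_sum _ fun j _ =>
      continuous_const.mul (continuous_apply j))

lemma aux_lower {k : ℕ} {M : Matrix (Fin k) (Fin k) ℝ} (hM : M.PosDef) :
    ∃ ε > (0:ℝ), ∀ y : Fin k → ℝ, ε * ∑ i, (y i) ^ 2 ≤ y ⬝ᵥ M *ᵥ y := by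
  rcases Nat.eq_zero_or_pos k with hk | hk
  · subst hk
    exact ⟨1, one_pos, fun y => by simp [dotProduct]⟩
  · set Q : (Fin k → ℝ) → ℝ := fun y => y ⬝ᵥ M *ᵥ y with hQ
    have hQc : Continuous Q := aux_cont M
    have hQpos : ∀ y : Fin k → ℝ, y ≠ 0 → 0 < Q y := by
      intro y hy
      have := hM.dotProduct_mulVec_pos hy
      simpa [star, Q] using this
    set Sp : Set (Fin k → ℝ) := {y | ∑ i, (y i) ^ 2 = 1} with hSp
    have hcont_sum : Continuous (fun y : Fin k → ℝ => ∑ i, (y i) ^ 2) :=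
      continuous_finset_sum _ fun i _ => (continuous_apply i).pow 2
    have hclosed : IsClosed Sp := isClosed_eq hcont_sum continuous_const
    have hbdd : Bornology.IsBounded Sp := by
      apply (Metric.isBounded_iff_subset_closedBall 0).2
      refine ⟨1, fun y hy => ?_⟩
      simp only [Metric.mem_closedBall, dist_zero_right]
      rw [pi_norm_le_iff_of_nonneg zero_le_one]
      intro i
      have h1 : (y i) ^ 2 ≤ 1 := by
        have hmem : ∑ i, (y i) ^ 2 = 1 := hy
        have h2 : (y i) ^ 2 ≤ ∑ j, (y j) ^ 2 :=
          Finset.single_le_sum (fun j _ => sq_nonneg (y j)) (Finset.mem_univ i)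
        linarith
      have h2 : |y i| ≤ 1 := by nlinarith [abs_nonneg (y i), sq_abs (y i)]
      simpa [Real.norm_eq_abs] using h2
    have hcomp : IsCompact Sp := Metric.isCompact_of_isClosed_isBounded hclosed hbdd
    have hne : Sp.Nonempty := by
      refine ⟨fun i => if i = ⟨0, hk⟩ then 1 else 0, ?_⟩
      simp [Sp, Finset.sum_ite_eq']
    obtain ⟨z, hzmem, hzmin⟩ := hcomp.exists_isMinOn hne hQc.continuousOn
    have hz0 : z ≠ 0 := by
      intro h
      rw [h] at hzmem
      simp [Sp] at hzmem
    refine ⟨Q z, hQpos z hz0, fun y => ?_⟩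
    rcases eq_or_ne y 0 with rfl | hy
    · simp [Q, dotProduct]
    · set s := ∑ i, (y i) ^ 2 with hs
      have hspos : 0 < s := by
        rcases Function.ne_iff.1 hy with ⟨i, hi⟩
        simp only [Pi.zero_apply] at hi
        have h0 : 0 < (y i)^2 := by positivity
        have h2 : (y i) ^ 2 ≤ ∑ j, (y j) ^ 2 :=
          Finset.single_le_sum (fun j _ => sq_nonneg (y j)) (Finset.mem_univ i)
        rw [hs]; linarith
      set t := Real.sqrt s with ht
      have htpos : 0 < t := Real.sqrt_pos.2 hspos
      set w : Fin k → ℝ := t⁻¹ • y with hw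
      have hwmem : w ∈ Sp := by
        have hsum : ∑ i, (w i) ^ 2 = (t^2)⁻¹ * s := by
          simp only [hw, Pi.smul_apply, smul_eq_mul, mul_pow, inv_pow, hs]
          rw [Finset.mul_sum]
        have ht2 : t ^ 2 = s := Real.sq_sqrt hspos.le
        simp only [Sp, Set.mem_setOf_eq, hsum, ht2]
        field_simp
      have hQy : Q y = t^2 * Q w := by
        have hyw : y = t • w := by
          rw [hw, smul_smul, mul_inv_cancel₀ htpos.ne', one_smul]
        rw [hyw, hQ]
        simp only [smul_dotProduct, Matrix.mulVec_smul, dotProduct_smul]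
        ring_nf
      have hle : Q z ≤ Q w := hzmin hwmem
      have ht2 : t ^ 2 = s := Real.sq_sqrt hspos.le
      calc Q z * s = Q z * t^2 := by rw [ht2]
        _ ≤ Q w * t^2 := mul_le_mul_of_nonneg_right hle (sq_nonneg t)
        _ = Q y := by rw [hQy]; ring


lemma aux_integrable {k : ℕ} {δ : ℝ} (hδ : 0 < δ) (μ : Fin k → ℝ) :
    Integrable (fun x : Fin k → ℝ => Real.exp (-δ * ∑ i, (x i - μ i) ^ 2)) := by
  have heq : (fun x : Fin k → ℝ => Real.exp (-δ * ∑ i, (x i - μ i) ^ 2))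
      = fun x : Fin k → ℝ => ∏ i, Real.exp (-δ * (x i - μ i) ^ 2) := by
    funext x
    rw [← Real.exp_sum, Finset.mul_sum]
  rw [heq]
  apply Integrable.fintype_prod (f := fun i (t : ℝ) => Real.exp (-δ * (t - μ i) ^ 2))
  intro i
  exact (integrable_exp_neg_mul_sq hδ).comp_sub_right (μ i)

lemma aux_hasDeriv (r c : ℝ) (k : ℕ) (hc : c ≠ 0) {σ : ℝ} (hσ : σ ≠ 0) :
    HasDerivAt (fun s : ℝ => Real.exp (-(1/2) * (s ^ 2)⁻¹ * r) * (s ^ k * c)⁻¹)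
      (Real.exp (-(1/2) * (σ ^ 2)⁻¹ * r) * ((r / σ ^ 3 - k / σ) * (σ ^ k * c)⁻¹)) σ := by
  have h1 : HasDerivAt (fun s : ℝ => s ^ 2) (2 * σ) σ := by
    simpa using hasDerivAt_pow 2 σ
  have h2 := h1.inv (pow_ne_zero 2 hσ)
  have h3 := (h2.const_mul (-(1/2) : ℝ)).mul_const r
  have h4 := h3.exp
  have h5 : HasDerivAt (fun s : ℝ => s ^ k * c) ((k * σ ^ (k - 1)) * c) σ :=
    (hasDerivAt_pow k σ).mul_const c
  have h6 := h5.inv (mul_ne_zero (pow_ne_zero k hσ) hc)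
  have h7 := h4.mul h6
  refine HasDerivAt.congr_deriv h7 ?_
  symm
  simp only [Pi.inv_apply]
  rcases Nat.eq_zero_or_pos k with hk | hk
  · subst hk; field_simp; ring
  · have hk1 : σ ^ (k - 1) = σ ^ k / σ := by
      rw [pow_sub₀ σ hσ hk, pow_one]; exact (div_eq_mul_inv _ _).symm
    rw [hk1]
    field_simp
    ring

set_option maxHeartbeats 1000000 in
/-- **Uniform total variation bound for Gaussian scale perturbations (proof of Theorem 3).**
There is `C > 0` such that for every `σ ∈ [a,b]` and every mean `μ`,
`sup_B |N(μ, σ²Σ)(B) − N(μ, σ0²Σ)(B)| ≤ C |σ − σ0|`. -/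
theorem gaussian_total_variation_scale_perturbation {k : ℕ}
    (S : Matrix (Fin k) (Fin k) ℝ) (hS : S.PosDef)
    (σ0 a b : ℝ) (ha : 0 < a) (haσ0 : a < σ0) (hσ0b : σ0 < b) :
    ∃ C > (0:ℝ), ∀ σ ∈ Set.Icc a b, ∀ μ : Fin k → ℝ,
      (⨆ B : {s : Set (Fin k → ℝ) // MeasurableSet s},
          |(gaussianMeasure μ (σ ^ 2 • S) B).toReal
            - (gaussianMeasure μ (σ0 ^ 2 • S) B).toReal|) ≤ C * |σ - σ0| := by
  have hb : 0 < b := lt_trans (lt_trans ha haσ0) hσ0b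
  have hdet : 0 < S.det := hS.det_pos
  have hπ : (0:ℝ) < 2 * Real.pi := by positivity
  set c := Real.sqrt ((2 * Real.pi) ^ k * S.det) with hcdef
  have hc : 0 < c := Real.sqrt_pos.2 (by positivity)
  have hSinv : (S⁻¹).PosDef := hS.inv
  obtain ⟨ε, hε, hεq⟩ := aux_lower hSinv
  set q : (Fin k → ℝ) → ℝ := fun y => y ⬝ᵥ S⁻¹ *ᵥ y with hqdef
  have hq0 : ∀ y, 0 ≤ q y := fun y =>
    le_trans (mul_nonneg hε.le (Finset.sum_nonneg fun i _ => sq_nonneg _)) (hεq y)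
  have hqc : Continuous q := aux_cont _
  -- dominating function G
  set G : (Fin k → ℝ) → ℝ := fun y =>
    Real.exp (-(1/2) * (b^2)⁻¹ * q y) * ((q y / a^3 + k / a) * (a^k * c)⁻¹) with hGdef
  have hG0 : ∀ y, 0 ≤ G y := by
    intro y
    apply mul_nonneg (Real.exp_pos _).le
    apply mul_nonneg (add_nonneg (div_nonneg (hq0 y) (by positivity)) (by positivity))
    positivity
  have hGc : Continuous G := by
    apply Continuous.mul
    · exact Real.continuous_exp.comp (continuous_const.mul hqc)
    · exact ((hqc.div_const _).add continuous_const).mul continuous_const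
  -- integrability of G
  set β : ℝ := (4*b^2)⁻¹ with hβdef
  have hβ : 0 < β := by positivity
  have hGint : Integrable G := by
    apply Integrable.mono' ((aux_integrable (δ := ε*β) (by positivity) 0).const_mul
      ((β⁻¹/a^3 + k/a) * (a^k*c)⁻¹))
    · exact hGc.aestronglyMeasurable
    · refine ae_of_all _ fun y => ?_
      have ht : 0 ≤ q y := hq0 y
      set t := q y with htdef
      have e0 : Real.exp (-(1/2) * (b^2)⁻¹ * t) = Real.exp (-(β*t)) * Real.exp (-(β*t)) := by
        rw [← Real.exp_add]
        congr 1
        rw [hβdef]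
        field_simp
        ring
      have e1 : β*t*Real.exp (-(β*t)) ≤ 1 := by
        rw [Real.exp_neg, ← div_eq_mul_inv, div_le_one (Real.exp_pos _)]
        have := Real.add_one_le_exp (β*t)
        linarith
      have e2 : t * Real.exp (-(β*t)) ≤ β⁻¹ := by
        have h := mul_le_mul_of_nonneg_left e1 (inv_nonneg.2 hβ.le)
        calc t * Real.exp (-(β*t)) = β⁻¹ * (β*t*Real.exp (-(β*t))) := by
              field_simp
          _ ≤ β⁻¹ * 1 := h
          _ = β⁻¹ := mul_one _
      have e3 : Real.exp (-(β*t)) ≤ 1 := by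
        rw [Real.exp_le_one_iff]
        nlinarith
      have e4 : Real.exp (-(β*t)) * (t/a^3 + k/a) ≤ β⁻¹/a^3 + k/a := by
        have h1 : Real.exp (-(β*t)) * (t/a^3) ≤ β⁻¹/a^3 := by
          rw [mul_div_assoc']
          apply div_le_div_of_nonneg_right ?_ (by positivity)
          · nlinarith [e2]
        have h2 : Real.exp (-(β*t)) * (k/a) ≤ k/a := by
          nlinarith [e3, Real.exp_pos (-(β*t)), div_nonneg (Nat.cast_nonneg (α := ℝ) k) ha.le]
        nlinarith
      have e5 : Real.exp (-(β*t)) ≤ Real.exp (-(ε*β) * ∑ i, (y i)^2) := by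
        apply Real.exp_le_exp.2
        have := hεq y
        nlinarith
      have hnorm : ‖G y‖ = G y := by
        rw [Real.norm_eq_abs, abs_of_nonneg (hG0 y)]
      rw [hnorm]
      have : G y = (Real.exp (-(β*t)) * (t/a^3 + k/a)) * Real.exp (-(β*t)) * (a^k*c)⁻¹ := by
        rw [hGdef]
        simp only
        rw [← htdef, e0]
        ring
      rw [this]
      have hfinal : (Real.exp (-(β*t)) * (t/a^3 + k/a)) * Real.exp (-(β*t)) * (a^k*c)⁻¹
          ≤ (β⁻¹/a^3 + k/a) * Real.exp (-(ε*β) * ∑ i, (y i)^2) * (a^k*c)⁻¹ := by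
        have h5 : 0 ≤ Real.exp (-(β*t)) * (t/a^3 + k/a) :=
          mul_nonneg (Real.exp_pos _).le
            (add_nonneg (div_nonneg ht (by positivity)) (by positivity))
        apply mul_le_mul_of_nonneg_right ?_ (by positivity)
        calc (Real.exp (-(β*t)) * (t/a^3 + k/a)) * Real.exp (-(β*t))
            ≤ (β⁻¹/a^3 + k/a) * Real.exp (-(β*t)) :=
              mul_le_mul_of_nonneg_right e4 (Real.exp_pos _).le
          _ ≤ (β⁻¹/a^3 + k/a) * Real.exp (-(ε*β) * ∑ i, (y i)^2) := by
              apply mul_le_mul_of_nonneg_left e5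
              positivity
      refine le_trans hfinal (le_of_eq ?_)
      simp only [Pi.zero_apply, sub_zero]
      ring
  have hGI0 : 0 ≤ ∫ y, G y := integral_nonneg hG0
  refine ⟨(∫ y, G y) + 1, by linarith, ?_⟩
  intro σ hσ μ
  have hσ0mem : σ0 ∈ Set.Icc a b := ⟨haσ0.le, hσ0b.le⟩
  have hσpos : 0 < σ := lt_of_lt_of_le ha hσ.1
  -- density functions
  set f : ℝ → (Fin k → ℝ) → ℝ := fun s x =>
    Real.exp (-(1/2) * (s^2)⁻¹ * q (x - μ)) * (s^k * c)⁻¹ with hfdef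
  have hfc : ∀ s : ℝ, Continuous (f s) := fun s =>
    (Real.continuous_exp.comp (continuous_const.mul
      (hqc.comp (continuous_id.sub continuous_const)))).mul continuous_const
  have hfpos : ∀ s : ℝ, 0 < s → ∀ x, 0 ≤ f s x := fun s hs x =>
    mul_nonneg (Real.exp_pos _).le
      (inv_nonneg.2 (mul_nonneg (pow_nonneg hs.le _) hc.le))
  -- measure rewriting
  have hmeas : ∀ s ∈ Set.Icc a b,
      gaussianMeasure μ (s^2 • S) = volume.withDensity (fun x => ENNReal.ofReal (f s x)) := by
    intro s hs
    have hs0 : 0 < s := lt_of_lt_of_le ha hs.1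
    unfold gaussianMeasure
    congr 1
    funext x
    congr 1
    have hinv : (s^2 • S)⁻¹ = (s^2)⁻¹ • S⁻¹ := by
      apply Matrix.inv_eq_right_inv
      rw [smul_mul_assoc, mul_smul_comm, Matrix.mul_nonsing_inv _
        (isUnit_iff_ne_zero.2 hdet.ne'), smul_smul, mul_inv_cancel₀ (by positivity), one_smul]
    have hdet2 : (s^2 • S).det = (s^2)^k * S.det := by
      rw [Matrix.det_smul, Fintype.card_fin]
    have hquad : (x - μ) ⬝ᵥ ((s^2 • S)⁻¹ *ᵥ (x - μ)) = (s^2)⁻¹ * q (x - μ) := by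
      rw [hinv, Matrix.smul_mulVec, dotProduct_smul, smul_eq_mul, hqdef]
    have hsqrt : Real.sqrt ((2 * Real.pi) ^ k * (s^2 • S).det) = s^k * c := by
      rw [hdet2]
      have h1 : (2 * Real.pi) ^ k * ((s^2)^k * S.det)
          = (s^k)^2 * ((2 * Real.pi) ^ k * S.det) := by
        rw [← pow_mul, ← pow_mul, Nat.mul_comm 2 k]
        ring
      rw [h1, Real.sqrt_mul (sq_nonneg _), Real.sqrt_sq (by positivity), hcdef]
    rw [hquad, hsqrt]
    simp only [hfdef]
    rw [div_eq_mul_inv, mul_assoc (-(1/2):ℝ)]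
  -- toReal of measure = set integral
  have happly : ∀ s ∈ Set.Icc a b, ∀ B : Set (Fin k → ℝ), MeasurableSet B →
      (gaussianMeasure μ (s^2 • S) B).toReal = ∫ x in B, f s x := by
    intro s hs B hB
    have hs0 : 0 < s := lt_of_lt_of_le ha hs.1
    rw [hmeas s hs, withDensity_apply _ hB]
    rw [integral_eq_lintegral_of_nonneg_ae (ae_of_all _ fun x => hfpos s hs0 x)
      ((hfc s).aestronglyMeasurable.restrict)]
  -- integrability of f s
  have hfint : ∀ s ∈ Set.Icc a b, Integrable (f s) := by
    intro s hs
    have hs0 : 0 < s := lt_of_lt_of_le ha hs.1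
    apply Integrable.mono' ((aux_integrable (δ := ε*((1/2) * (b^2)⁻¹)) (by positivity) μ).const_mul
      ((a^k*c)⁻¹))
    · exact (hfc s).aestronglyMeasurable
    · refine ae_of_all _ fun x => ?_
      have hr : 0 ≤ q (x - μ) := hq0 _
      have h1 : Real.exp (-(1/2) * (s^2)⁻¹ * q (x - μ))
          ≤ Real.exp (-(ε*((1/2) * (b^2)⁻¹)) * ∑ i, (x i - μ i)^2) := by
        apply Real.exp_le_exp.2
        have hqlow : ε * ∑ i, ((x - μ) i)^2 ≤ q (x - μ) := hεq _
        have hsum : ∑ i, ((x - μ) i)^2 = ∑ i, (x i - μ i)^2 := by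
          simp [Pi.sub_apply]
        rw [hsum] at hqlow
        have hinv2 : (b^2)⁻¹ ≤ (s^2)⁻¹ := by
          apply inv_anti₀ (by positivity)
          nlinarith [hs.2]
        have hA := mul_le_mul_of_nonneg_right hinv2 hr
        have hB := mul_le_mul_of_nonneg_left hqlow
          (by positivity : (0:ℝ) ≤ (1/2) * (b^2)⁻¹)
        linarith [hA, hB]
      have h2 : (s^k * c)⁻¹ ≤ (a^k * c)⁻¹ := by
        apply inv_anti₀ (by positivity)
        exact mul_le_mul_of_nonneg_right (pow_le_pow_left₀ ha.le hs.1 k) hc.le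
      have hnorm : ‖f s x‖ = f s x := by
        rw [Real.norm_eq_abs, abs_of_nonneg (hfpos s hs0 x)]
      rw [hnorm]
      simp only [hfdef]
      calc Real.exp (-(1/2) * (s^2)⁻¹ * q (x - μ)) * (s^k * c)⁻¹
          ≤ Real.exp (-(ε*((1/2) * (b^2)⁻¹)) * ∑ i, (x i - μ i)^2) * (a^k * c)⁻¹ :=
            mul_le_mul h1 h2 (by positivity) (Real.exp_pos _).le
        _ = (a^k*c)⁻¹ * Real.exp (-(ε*((1/2) * (b^2)⁻¹)) * ∑ i, (x i - μ i)^2) := mul_comm _ _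
  -- mean value bound
  have hMVT : ∀ x, |f σ x - f σ0 x| ≤ G (x - μ) * |σ - σ0| := by
    intro x
    set r := q (x - μ) with hrdef
    have hr : 0 ≤ r := hq0 _
    have hbound : ∀ s ∈ Set.Icc a b,
        ‖Real.exp (-(1/2) * (s^2)⁻¹ * r) * ((r / s^3 - k / s) * (s^k * c)⁻¹)‖
          ≤ G (x - μ) := by
      intro s hs
      have hs0 : 0 < s := lt_of_lt_of_le ha hs.1
      rw [Real.norm_eq_abs, abs_mul, abs_mul, abs_of_nonneg (Real.exp_pos _).le,
        abs_of_nonneg (inv_nonneg.2 (by positivity : (0:ℝ) ≤ s^k * c))]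
      have hs3 : a^3 ≤ s^3 := pow_le_pow_left₀ ha.le hs.1 3
      have ha1 : r / s^3 ≤ r / a^3 := by gcongr
      have hk1 : (k:ℝ) / s ≤ (k:ℝ) / a := by gcongr; exact hs.1
      have h1 : |r / s^3 - (k:ℝ) / s| ≤ r / a^3 + (k:ℝ) / a := by
        have habs := abs_sub (r / s^3) ((k:ℝ) / s)
        have e1 : |r / s^3| = r / s^3 := abs_of_nonneg (by positivity)
        have e2 : |(k:ℝ) / s| = (k:ℝ) / s := abs_of_nonneg (by positivity)
        rw [e1, e2] at habs
        linarith
      have h2 : (s^k * c)⁻¹ ≤ (a^k * c)⁻¹ := by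
        apply inv_anti₀ (by positivity)
        exact mul_le_mul_of_nonneg_right (pow_le_pow_left₀ ha.le hs.1 k) hc.le
      have hE : Real.exp (-(1/2) * (s^2)⁻¹ * r) ≤ Real.exp (-(1/2) * (b^2)⁻¹ * r) := by
        apply Real.exp_le_exp.2
        have hinv2 : (b^2)⁻¹ ≤ (s^2)⁻¹ := by
          apply inv_anti₀ (by positivity)
          nlinarith [hs.2]
        have hA := mul_le_mul_of_nonneg_right hinv2 hr
        linarith
      have hX : |r / s^3 - (k:ℝ) / s| * (s^k * c)⁻¹
          ≤ (r / a^3 + (k:ℝ) / a) * (a^k * c)⁻¹ :=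
        mul_le_mul h1 h2 (by positivity) (by positivity)
      simp only [hGdef]
      rw [← hrdef]
      exact mul_le_mul hE hX (by positivity) (Real.exp_pos _).le
    have := Convex.norm_image_sub_le_of_norm_hasDerivWithin_le
      (f := fun s : ℝ => Real.exp (-(1/2) * (s^2)⁻¹ * r) * (s^k * c)⁻¹)
      (f' := fun s : ℝ => Real.exp (-(1/2) * (s^2)⁻¹ * r) * ((r / s^3 - k / s) * (s^k * c)⁻¹))
      (s := Set.Icc a b)
      (fun s hs => (aux_hasDeriv r c k hc.ne' (lt_of_lt_of_le ha hs.1).ne').hasDerivWithinAt)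
      hbound (convex_Icc a b) hσ0mem hσ
    rw [Real.norm_eq_abs, Real.norm_eq_abs] at this
    simp only [hfdef, ← hrdef]
    exact this
  -- main estimate
  have hGμ : Integrable (fun x => G (x - μ)) := hGint.comp_sub_right μ
  haveI : Nonempty {s : Set (Fin k → ℝ) // MeasurableSet s} := ⟨⟨∅, MeasurableSet.empty⟩⟩
  apply ciSup_le
  rintro ⟨B, hB⟩
  show |(gaussianMeasure μ (σ^2 • S) B).toReal - (gaussianMeasure μ (σ0^2 • S) B).toReal|
    ≤ ((∫ y, G y) + 1) * |σ - σ0|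
  rw [happly σ hσ B hB, happly σ0 hσ0mem B hB]
  have hIσ : IntegrableOn (f σ) B := (hfint σ hσ).integrableOn
  have hIσ0 : IntegrableOn (f σ0) B := (hfint σ0 hσ0mem).integrableOn
  calc |(∫ x in B, f σ x) - ∫ x in B, f σ0 x|
      = |∫ x in B, (f σ x - f σ0 x)| := by rw [integral_sub hIσ hIσ0]
    _ ≤ ∫ x in B, |f σ x - f σ0 x| := by
        simpa [Real.norm_eq_abs] using
          norm_integral_le_integral_norm (μ := volume.restrict B)
            (fun x => f σ x - f σ0 x)
    _ ≤ ∫ x in B, G (x - μ) * |σ - σ0| := by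
        apply integral_mono (((hfint σ hσ).sub (hfint σ0 hσ0mem)).abs.integrableOn)
          ((hGμ.mul_const _).integrableOn) hMVT
    _ ≤ ∫ x, G (x - μ) * |σ - σ0| :=
        setIntegral_le_integral (hGμ.mul_const _)
          (ae_of_all _ fun x => mul_nonneg (hG0 _) (abs_nonneg _))
    _ = (∫ x, G (x - μ)) * |σ - σ0| := integral_mul_const _ _
    _ = (∫ y, G y) * |σ - σ0| := by rw [integral_sub_right_eq_self G μ]
    _ ≤ ((∫ y, G y) + 1) * |σ - σ0| := by
        apply mul_le_mul_of_nonneg_right (by linarith) (abs_nonneg _)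
end
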